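/- Let λ ∈ {−1, +1} and let n ≥ 2 be a real number. There exist s₀ > 0 and a differentiable function Z : [s₀, ∞) → ℝ satisfying the Riccati equation (1/s)·dZ/ds = 2(n−1)/s⁴ − (n+1)Z/s² − λZ − Z² for all s ≥ s₀, together with the two-sided bound (2λ(n−1) − 1)/s⁴ ≤ Z(s) ≤ (2λ(n−1) + 1)/s⁴ for all s ≥ s₀. In particular Z(s) = (2λ(n−1) + O(1))·s^{−4} as s → ∞. -/

import Mathlib

open Real MeasureTheory Filter
open scoped BoundedContinuousFunction

noncomputable section RiccatiAux

/-- clamp into `[2λ(n-1)-1, 2λ(n-1)+1]` -/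
def rcl (lam n t : ℝ) : ℝ := max (2*lam*(n-1) - 1) (min (2*lam*(n-1) + 1) t)

def rpsi (lam n : ℝ) (g : ℝ →ᵇ ℝ) (u : ℝ) : ℝ :=
  Real.exp (lam*u^2/2) * (2*(n-1) * u^(n-2) - (rcl lam n (g u))^2 * u^(n-6))

def rh (lam n u : ℝ) : ℝ := Real.exp (lam*u^2/2) * u^(n-2)

def rH (lam n u : ℝ) : ℝ := lam * (Real.exp (lam*u^2/2) * u^(n-3))

def rHd (lam n u : ℝ) : ℝ := Real.exp (lam*u^2/2) * (u^(n-2) + lam*(n-3)*u^(n-4))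

lemma hasDerivAt_exp_sq_mul_rpow (c r : ℝ) {u : ℝ} (hu : 0 < u) :
    HasDerivAt (fun x : ℝ => Real.exp (c * x ^ 2 / 2) * x ^ r)
      (Real.exp (c * u ^ 2 / 2) * (c * u * u ^ r + r * u ^ (r - 1))) u := by
  have h1 : HasDerivAt (fun x : ℝ => c * x ^ 2 / 2) (c * u) u := by
    have := ((hasDerivAt_pow 2 u).const_mul c).div_const 2
    refine this.congr_deriv ?_
    push_cast; ring
  have h3 : HasDerivAt (fun x : ℝ => x ^ r) (r * u ^ (r - 1)) u :=
    Real.hasDerivAt_rpow_const (Or.inl hu.ne')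
  have := h1.exp.mul h3
  refine this.congr_deriv ?_
  ring

section
variable {lam n : ℝ} (hlam : lam = -1 ∨ lam = 1) (hn : 2 ≤ n)

lemma abs_two_lam_mul (hlam : lam = -1 ∨ lam = 1) (hn : 2 ≤ n) :
    |2*lam*(n-1)| = 2*(n-1) := by
  rcases hlam with h | h <;> subst h
  · rw [show 2*(-1:ℝ)*(n-1) = -(2*(n-1)) by ring, abs_neg, abs_of_nonneg] ; nlinarith
  · rw [show 2*(1:ℝ)*(n-1) = 2*(n-1) by ring, abs_of_nonneg] ; nlinarith

lemma rcl_abs_le (hlam : lam = -1 ∨ lam = 1) (hn : 2 ≤ n) (t : ℝ) :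
    |rcl lam n t| ≤ 2*n - 1 := by
  have h1' := abs_le.mp (le_of_eq (abs_two_lam_mul hlam hn))
  rw [abs_le]
  unfold rcl
  constructor
  · nlinarith [le_max_left (2*lam*(n-1) - 1) (min (2*lam*(n-1) + 1) t)]
  · have h0 : min (2*lam*(n-1) + 1) t ≤ 2*lam*(n-1) + 1 := min_le_left _ _
    have h2 : 2*lam*(n-1) - 1 ≤ 2*n - 1 := by nlinarith
    have h3 : 2*lam*(n-1) + 1 ≤ 2*n - 1 := by nlinarith
    exact max_le h2 (le_trans h0 h3)

lemma rcl_lip (p q : ℝ) : |rcl lam n p - rcl lam n q| ≤ |p - q| := by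
  unfold rcl
  refine le_trans (abs_max_sub_max_le_max _ _ _ _) ?_
  simp only [sub_self, abs_zero]
  refine max_le (abs_nonneg _) ?_
  refine le_trans (abs_min_sub_min_le_max _ _ _ _) ?_
  simp [sub_self]

lemma rcl_eq_self {t : ℝ} (h1 : 2*lam*(n-1) - 1 ≤ t) (h2 : t ≤ 2*lam*(n-1) + 1) :
    rcl lam n t = t := by
  unfold rcl
  rw [min_eq_right h2, max_eq_right h1]

end

section
variable {lam n : ℝ}

lemma rpow_split {u : ℝ} (hu : 0 < u) (r : ℝ) (k : ℕ) :
    u ^ r * u ^ (k:ℕ) = u ^ (r + (k:ℕ)) := by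
  rw [← Real.rpow_natCast u k, ← Real.rpow_add hu]

lemma rpow_m6 {u : ℝ} (hu : 0 < u) : u ^ (n-6) * u ^ (4:ℕ) = u ^ (n-2) := by
  have := rpow_split hu (n-6) 4
  push_cast at this
  rw [show n - 6 + 4 = n - 2 by ring] at this
  exact this

lemma rpow_m4 {u : ℝ} (hu : 0 < u) : u ^ (n-4) * u ^ (2:ℕ) = u ^ (n-2) := by
  have := rpow_split hu (n-4) 2
  push_cast at this
  rw [show n - 4 + 2 = n - 2 by ring] at this
  exact this

lemma rpow_m3 {u : ℝ} (hu : 0 < u) : u ^ (n-3) * u = u ^ (n-2) := by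
  have := rpow_split hu (n-3) 1
  push_cast at this
  rw [show n - 3 + 1 = n - 2 by ring] at this
  simpa using this

lemma rh_pos {u : ℝ} (hu : 0 < u) : 0 < rh lam n u := by
  unfold rh
  positivity

lemma rpsi_bounds (hlam : lam = -1 ∨ lam = 1) (hn : 2 ≤ n) (g : ℝ →ᵇ ℝ) {u : ℝ}
    (hu : 4*n ≤ u) :
    (2*(n-1) - 1/256) * rh lam n u ≤ rpsi lam n g u ∧
      rpsi lam n g u ≤ 2*(n-1) * rh lam n u := by
  have hu0 : (0:ℝ) < u := by nlinarith
  have hcl := rcl_abs_le hlam hn (g u)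
  have hsq : (rcl lam n (g u))^2 ≤ (2*n-1)^2 := by
    nlinarith [sq_abs (rcl lam n (g u)), abs_nonneg (rcl lam n (g u))]
  have hu4 : (4*n)^4 ≤ u^(4:ℕ) := by
    have h0 : (0:ℝ) ≤ 4*n := by nlinarith
    exact pow_le_pow_left₀ h0 hu 4
  have hpow : (0:ℝ) ≤ u ^ (n-6) := Real.rpow_nonneg hu0.le _
  have hkey : (rcl lam n (g u))^2 * u^(n-6) ≤ (1/256) * u^(n-2) := by
    rw [← rpow_m6 hu0]
    have h1 : (rcl lam n (g u))^2 ≤ (1/256) * u^(4:ℕ) := by nlinarith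
    nlinarith [mul_le_mul_of_nonneg_right h1 hpow]
  have hsqnn : 0 ≤ (rcl lam n (g u))^2 * u^(n-6) := by positivity
  have hexp : 0 < Real.exp (lam*u^2/2) := Real.exp_pos _
  unfold rpsi rh
  constructor
  · rw [show (2*(n-1) - 1/256) * (Real.exp (lam*u^2/2) * u^(n-2))
        = Real.exp (lam*u^2/2) * (2*(n-1) * u^(n-2) - (1/256) * u^(n-2)) by ring]
    apply mul_le_mul_of_nonneg_left _ hexp.le
    nlinarith
  · rw [show 2*(n-1) * (Real.exp (lam*u^2/2) * u^(n-2))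
        = Real.exp (lam*u^2/2) * (2*(n-1) * u^(n-2)) by ring]
    apply mul_le_mul_of_nonneg_left _ hexp.le
    nlinarith

lemma rpsi_lip (hlam : lam = -1 ∨ lam = 1) (hn : 2 ≤ n) (g₁ g₂ : ℝ →ᵇ ℝ) {u : ℝ}
    (hu : 4*n ≤ u) :
    |rpsi lam n g₁ u - rpsi lam n g₂ u| ≤ (1/4) * dist g₁ g₂ * rh lam n u := by
  have hu0 : (0:ℝ) < u := by nlinarith
  set c₁ := rcl lam n (g₁ u) with hc₁def
  set c₂ := rcl lam n (g₂ u) with hc₂def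
  have hd : |c₁ - c₂| ≤ dist g₁ g₂ := by
    refine le_trans (rcl_lip _ _) ?_
    rw [← Real.dist_eq]
    exact BoundedContinuousFunction.dist_coe_le_dist u
  have hc₁ := rcl_abs_le hlam hn (g₁ u)
  have hc₂ := rcl_abs_le hlam hn (g₂ u)
  rw [← hc₂def] at hc₂
  have habs : |c₂^2 - c₁^2| ≤ (4*n) * dist g₁ g₂ := by
    rw [show c₂^2 - c₁^2 = (c₂ + c₁) * (c₂ - c₁) by ring, abs_mul]
    have h1 : |c₂ + c₁| ≤ 4*n := by
      have := abs_add_le c₂ c₁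
      nlinarith
    have h2 : |c₂ - c₁| ≤ dist g₁ g₂ := by rw [abs_sub_comm]; exact hd
    exact mul_le_mul h1 h2 (abs_nonneg _) (by nlinarith)
  have hexp : 0 < Real.exp (lam*u^2/2) := Real.exp_pos _
  have heq : rpsi lam n g₁ u - rpsi lam n g₂ u
      = Real.exp (lam*u^2/2) * ((c₂^2 - c₁^2) * u^(n-6)) := by
    unfold rpsi; rw [← hc₁def, ← hc₂def]; ring
  rw [heq, abs_mul, abs_of_pos hexp, abs_mul,
    abs_of_nonneg (Real.rpow_nonneg hu0.le (n-6))]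
  have hu4 : (4*n)^4 ≤ u^(4:ℕ) := by
    have h0 : (0:ℝ) ≤ 4*n := by nlinarith
    exact pow_le_pow_left₀ h0 hu 4
  have hpow' : (0:ℝ) ≤ u ^ (n-6) := Real.rpow_nonneg hu0.le _
  have hkey : (4*n) * u^(n-6) ≤ (1/4) * u^(n-2) := by
    rw [← rpow_m6 hu0]
    have hn3 : (8:ℝ) ≤ n^3 := by
      nlinarith [mul_nonneg (sub_nonneg.mpr hn) (by positivity : (0:ℝ) ≤ n^2+2*n+4)]
    have h1 : (4*n) ≤ (1/4) * u^(4:ℕ) := by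
      nlinarith [hu4, hn3, mul_le_mul_of_nonneg_left hn3 (by nlinarith : (0:ℝ) ≤ n)]
    nlinarith [mul_le_mul_of_nonneg_right h1 hpow']
  have hdnn : 0 ≤ dist g₁ g₂ := dist_nonneg
  unfold rh
  have step1 : |c₂^2 - c₁^2| * u^(n-6) ≤ ((4*n) * dist g₁ g₂) * u^(n-6) :=
    mul_le_mul_of_nonneg_right habs hpow'
  have step2 : ((4*n) * u^(n-6)) * dist g₁ g₂ ≤ ((1/4) * u^(n-2)) * dist g₁ g₂ :=
    mul_le_mul_of_nonneg_right hkey hdnn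
  nlinarith [mul_le_mul_of_nonneg_left step1 hexp.le,
    mul_le_mul_of_nonneg_left step2 hexp.le,
    mul_pos hexp (Real.rpow_pos_of_pos hu0 (n-2))]

lemma rH_hasDeriv (hlam : lam = -1 ∨ lam = 1) {u : ℝ} (hu : 0 < u) :
    HasDerivAt (rH lam n) (rHd lam n u) u := by
  have hlam2 : lam * lam = 1 := by rcases hlam with h | h <;> subst h <;> norm_num
  have h0 := (hasDerivAt_exp_sq_mul_rpow lam (n-3) hu).const_mul lam
  refine h0.congr_deriv ?_
  symm
  unfold rHd
  rw [show n-3-1 = n-4 by ring, ← rpow_m3 (n := n) hu]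
  linear_combination (-(Real.exp (lam*u^2/2) * (u^(n-3) * u))) * hlam2

lemma rHd_close (hlam : lam = -1 ∨ lam = 1) (hn : 2 ≤ n) {u : ℝ} (hu : 4*n ≤ u) :
    (16*n) * |rHd lam n u - rh lam n u| ≤ rh lam n u := by
  have hu0 : (0:ℝ) < u := by nlinarith
  have hexp : 0 < Real.exp (lam*u^2/2) := Real.exp_pos _
  have heq : rHd lam n u - rh lam n u = Real.exp (lam*u^2/2) * (lam*(n-3) * u^(n-4)) := by
    unfold rHd rh; ring
  have hlamabs : |lam| = 1 := by rcases hlam with h | h <;> subst h <;> norm_num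
  rw [heq, abs_mul, abs_of_pos hexp, abs_mul, abs_mul, hlamabs, one_mul,
    abs_of_nonneg (Real.rpow_nonneg hu0.le (n-4))]
  have hu2 : (4*n)^2 ≤ u^(2:ℕ) := by
    have h0 : (0:ℝ) ≤ 4*n := by nlinarith
    exact pow_le_pow_left₀ h0 hu 2
  have hpow' : (0:ℝ) ≤ u ^ (n-4) := Real.rpow_nonneg hu0.le _
  have habs3 : |n-3| ≤ n := by
    rw [abs_le]; constructor <;> nlinarith
  have h1 : 16*n*|n-3| ≤ u^(2:ℕ) := by nlinarith [abs_nonneg (n-3)]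
  have hkey : (16*n) * (|n-3| * u^(n-4)) ≤ u^(n-2) := by
    rw [← rpow_m4 hu0]
    calc (16*n) * (|n-3| * u^(n-4)) = (16*n*|n-3|) * u^(n-4) := by ring
      _ ≤ u^(2:ℕ) * u^(n-4) := mul_le_mul_of_nonneg_right h1 hpow'
      _ = u^(n-4) * u^(2:ℕ) := by ring
  unfold rh
  nlinarith [mul_le_mul_of_nonneg_left hkey hexp.le]

lemma contOn_rpow (r : ℝ) : ContinuousOn (fun u : ℝ => u ^ r) (Set.Ioi 0) :=
  fun u hu => (Real.continuousAt_rpow_const u r (Or.inl (ne_of_gt hu))).continuousWithinAt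

lemma cont_exp_sq : Continuous (fun u : ℝ => Real.exp (lam*u^2/2)) := by
  fun_prop

lemma rh_contOn : ContinuousOn (rh lam n) (Set.Ioi 0) := by
  unfold rh
  exact cont_exp_sq.continuousOn.mul (contOn_rpow _)

lemma rHd_contOn : ContinuousOn (rHd lam n) (Set.Ioi 0) := by
  unfold rHd
  apply cont_exp_sq.continuousOn.mul
  exact (contOn_rpow _).add (continuousOn_const.mul (contOn_rpow _))

lemma cont_rcl : Continuous (rcl lam n) := by
  unfold rcl
  exact continuous_const.max (continuous_const.min continuous_id)

lemma rpsi_contOn (g : ℝ →ᵇ ℝ) : ContinuousOn (rpsi lam n g) (Set.Ioi 0) := by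
  unfold rpsi
  apply cont_exp_sq.continuousOn.mul
  apply ContinuousOn.sub
  · exact continuousOn_const.mul (contOn_rpow _)
  · exact (((cont_rcl.comp g.continuous).pow 2).continuousOn).mul (contOn_rpow _)

lemma ii_of_contOn {f : ℝ → ℝ} (hf : ContinuousOn f (Set.Ioi 0)) {x y : ℝ}
    (hx : 0 < x) (hy : 0 < y) : IntervalIntegrable f volume x y := by
  apply ContinuousOn.intervalIntegrable
  apply hf.mono
  intro z hz
  have := hz.1
  simp only [Set.mem_Ioi]
  have hmin : 0 < min x y := lt_min hx hy
  exact lt_of_lt_of_le hmin this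

-- FTC for the primitive
lemma Q_hasDeriv (g : ℝ →ᵇ ℝ) (hn : 2 ≤ n) {s : ℝ} (hs : 0 < s) :
    HasDerivAt (fun t => ∫ u in (4*n)..t, rpsi lam n g u) (rpsi lam n g s) s := by
  have h4n : (0:ℝ) < 4*n := by nlinarith
  exact intervalIntegral.integral_hasDerivAt_right
    (ii_of_contOn (rpsi_contOn g) h4n hs)
    ((rpsi_contOn g).stronglyMeasurableAtFilter isOpen_Ioi s hs)
    ((rpsi_contOn g).continuousAt (isOpen_Ioi.mem_nhds hs))

-- FTC identity for H
lemma H_ftc (hlam : lam = -1 ∨ lam = 1) (hn : 2 ≤ n) {s : ℝ} (hs : 4*n ≤ s) :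
    ∫ u in (4*n)..s, rHd lam n u = rH lam n s - rH lam n (4*n) := by
  have h4n : (0:ℝ) < 4*n := by nlinarith
  apply intervalIntegral.integral_eq_sub_of_hasDerivAt
  · intro x hx
    rw [Set.uIcc_of_le hs] at hx
    exact rH_hasDeriv hlam (lt_of_lt_of_le h4n hx.1)
  · exact ii_of_contOn rHd_contOn h4n (by nlinarith)

-- bounds on E = ∫ rh in terms of rH
lemma E_nonneg (hn : 2 ≤ n) {s : ℝ} (hs : 4*n ≤ s) :
    0 ≤ ∫ u in (4*n)..s, rh lam n u := by
  apply intervalIntegral.integral_nonneg hs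
  intro u hu
  have h4n : (0:ℝ) < 4*n := by nlinarith
  exact (rh_pos (lt_of_lt_of_le h4n hu.1)).le

lemma E_bounds (hlam : lam = -1 ∨ lam = 1) (hn : 2 ≤ n) {s : ℝ} (hs : 4*n ≤ s) :
    (16*n - 1) * (∫ u in (4*n)..s, rh lam n u) ≤ (16*n) * (rH lam n s - rH lam n (4*n)) ∧
    (16*n) * (rH lam n s - rH lam n (4*n)) ≤ (16*n + 1) * (∫ u in (4*n)..s, rh lam n u) := by
  have h4n : (0:ℝ) < 4*n := by nlinarith
  have hs0 : (0:ℝ) < s := by nlinarith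
  have hii_h : IntervalIntegrable (rh lam n) volume (4*n) s := ii_of_contOn rh_contOn h4n hs0
  have hii_Hd : IntervalIntegrable (rHd lam n) volume (4*n) s := ii_of_contOn rHd_contOn h4n hs0
  rw [← H_ftc hlam hn hs]
  constructor
  · rw [show (16*n - 1) * (∫ u in (4*n)..s, rh lam n u)
        = ∫ u in (4*n)..s, (16*n - 1) * rh lam n u from
      (intervalIntegral.integral_const_mul _ _).symm,
      show (16*n) * (∫ u in (4*n)..s, rHd lam n u)
        = ∫ u in (4*n)..s, (16*n) * rHd lam n u from
      (intervalIntegral.integral_const_mul _ _).symm]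
    apply intervalIntegral.integral_mono_on hs (hii_h.const_mul _) (hii_Hd.const_mul _)
    intro x hx
    have hcl := rHd_close hlam hn hx.1
    have h2 := neg_abs_le (rHd lam n x - rh lam n x)
    nlinarith [h2, hcl, abs_nonneg (rHd lam n x - rh lam n x)]
  · rw [show (16*n + 1) * (∫ u in (4*n)..s, rh lam n u)
        = ∫ u in (4*n)..s, (16*n + 1) * rh lam n u from
      (intervalIntegral.integral_const_mul _ _).symm,
      show (16*n) * (∫ u in (4*n)..s, rHd lam n u)
        = ∫ u in (4*n)..s, (16*n) * rHd lam n u from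
      (intervalIntegral.integral_const_mul _ _).symm]
    apply intervalIntegral.integral_mono_on hs (hii_Hd.const_mul _) (hii_h.const_mul _)
    intro x hx
    have hcl := rHd_close hlam hn hx.1
    have h2 := le_abs_self (rHd lam n x - rh lam n x)
    nlinarith [h2, hcl]

end


section
variable {lam n : ℝ}

lemma integrable_rh_neg (hlam' : lam = -1) (hn : 2 ≤ n) : Integrable (rh lam n) := by
  subst hlam'
  have heq : rh (-1) n = fun x : ℝ => x ^ (n-2) * Real.exp (-(1/2) * x^2) := by
    funext x
    unfold rh
    rw [show (-1:ℝ)*x^2/2 = -(1/2) * x^2 by ring, mul_comm]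
  rw [heq]
  exact integrable_rpow_mul_exp_neg_mul_sq (by norm_num) (by nlinarith)

lemma integrableOn_of_bound (hlam' : lam = -1) (hn : 2 ≤ n) {f : ℝ → ℝ} {s : ℝ}
    (hs : 0 < s) (hmeas : ContinuousOn f (Set.Ioi 0)) (C : ℝ)
    (hb : ∀ u ∈ Set.Ioi s, |f u| ≤ C * rh lam n u) :
    IntegrableOn f (Set.Ioi s) volume := by
  apply Integrable.mono' (((integrable_rh_neg hlam' hn).integrableOn).const_mul C)
  · exact (hmeas.mono (Set.Ioi_subset_Ioi hs.le)).aestronglyMeasurable measurableSet_Ioi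
  · rw [ae_restrict_iff' measurableSet_Ioi]
    exact ae_of_all _ (fun u hu => by rw [Real.norm_eq_abs]; exact hb u hu)

lemma rpsi_abs_le (hlam : lam = -1 ∨ lam = 1) (hn : 2 ≤ n) (g : ℝ →ᵇ ℝ) {u : ℝ}
    (hu : 4*n ≤ u) : |rpsi lam n g u| ≤ (2*n) * rh lam n u := by
  obtain ⟨h1, h2⟩ := rpsi_bounds hlam hn g hu
  have hh := rh_pos (lam := lam) (n := n) (show (0:ℝ) < u by nlinarith)
  rw [abs_le]
  constructor <;> nlinarith

lemma rHd_abs_le (hlam : lam = -1 ∨ lam = 1) (hn : 2 ≤ n) {u : ℝ}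
    (hu : 4*n ≤ u) : |rHd lam n u| ≤ 2 * rh lam n u := by
  have hcl := rHd_close hlam hn hu
  have hh := rh_pos (lam := lam) (n := n) (show (0:ℝ) < u by nlinarith)
  have h2 : |rHd lam n u| - |rh lam n u| ≤ |rHd lam n u - rh lam n u| :=
    abs_sub_abs_le_abs_sub _ _
  rw [abs_of_pos hh] at h2
  nlinarith [abs_nonneg (rHd lam n u - rh lam n u), abs_nonneg (rHd lam n u)]

lemma integrableOn_rpsi_tail (hlam : lam = -1 ∨ lam = 1) (hlam' : lam = -1) (hn : 2 ≤ n)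
    (g : ℝ →ᵇ ℝ) {s : ℝ} (hs : 4*n ≤ s) :
    IntegrableOn (rpsi lam n g) (Set.Ioi s) volume := by
  apply integrableOn_of_bound hlam' hn (by nlinarith) (rpsi_contOn g) (2*n)
  intro u hu
  exact rpsi_abs_le hlam hn g (le_trans hs (le_of_lt hu))

lemma integrableOn_rHd_tail (hlam : lam = -1 ∨ lam = 1) (hlam' : lam = -1) (hn : 2 ≤ n)
    {s : ℝ} (hs : 4*n ≤ s) :
    IntegrableOn (rHd lam n) (Set.Ioi s) volume := by
  apply integrableOn_of_bound hlam' hn (by nlinarith) rHd_contOn 2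
  intro u hu
  exact rHd_abs_le hlam hn (le_trans hs (le_of_lt hu))

lemma integrableOn_rh_tail (hlam' : lam = -1) (hn : 2 ≤ n) {s : ℝ} :
    IntegrableOn (rh lam n) (Set.Ioi s) volume :=
  (integrable_rh_neg hlam' hn).integrableOn

lemma tendsto_rH_zero (hlam' : lam = -1) (hn : 2 ≤ n) :
    Filter.Tendsto (rH lam n) Filter.atTop (nhds 0) := by
  subst hlam'
  have hT := tendsto_rpow_mul_exp_neg_mul_atTop_nhds_zero (n-3) 1 one_pos
  have hsq : Filter.Tendsto (fun u : ℝ => Real.exp ((-1)*u^2/2) * u^(n-3))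
      Filter.atTop (nhds 0) := by
    apply tendsto_of_tendsto_of_tendsto_of_le_of_le' tendsto_const_nhds hT
    · filter_upwards [Filter.eventually_ge_atTop (2:ℝ)] with u hu
      positivity
    · filter_upwards [Filter.eventually_ge_atTop (2:ℝ)] with u hu
      have hexp : Real.exp ((-1)*u^2/2) ≤ Real.exp (-1*u) := by
        apply Real.exp_le_exp.mpr
        nlinarith
      have : (0:ℝ) ≤ u ^ (n-3) := Real.rpow_nonneg (by nlinarith) _
      calc Real.exp ((-1)*u^2/2) * u^(n-3) ≤ Real.exp (-1*u) * u^(n-3) :=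
            mul_le_mul_of_nonneg_right hexp this
        _ = u^(n-3) * Real.exp (-1*u) := by ring
  have := hsq.const_mul (-1 : ℝ)
  simp only [mul_zero] at this
  exact this

lemma tail_ftc (hlam : lam = -1 ∨ lam = 1) (hlam' : lam = -1) (hn : 2 ≤ n) {s : ℝ}
    (hs : 4*n ≤ s) :
    ∫ u in Set.Ioi s, rHd lam n u = - rH lam n s := by
  have hs0 : (0:ℝ) < s := by nlinarith
  have := MeasureTheory.integral_Ioi_of_hasDerivAt_of_tendsto
    (f := rH lam n) (f' := rHd lam n) (a := s)
    ((rH_hasDeriv hlam hs0).continuousAt.continuousWithinAt)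
    (fun x hx => rH_hasDeriv hlam (lt_trans hs0 hx))
    (integrableOn_rHd_tail hlam hlam' hn hs)
    (tendsto_rH_zero hlam' hn)
  rw [this]; ring

lemma tail_h_bounds (hlam : lam = -1 ∨ lam = 1) (hlam' : lam = -1) (hn : 2 ≤ n) {s : ℝ}
    (hs : 4*n ≤ s) :
    (16*n - 1) * (∫ u in Set.Ioi s, rh lam n u) ≤ (16*n) * (- rH lam n s) ∧
    (16*n) * (- rH lam n s) ≤ (16*n + 1) * (∫ u in Set.Ioi s, rh lam n u) := by
  have hid : (16*n) * (- rH lam n s) = (16*n) * ∫ u in Set.Ioi s, rHd lam n u := by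
    rw [tail_ftc hlam hlam' hn hs]
  rw [hid]
  have hih := integrableOn_rh_tail hlam' hn (s := s)
  have hiHd := integrableOn_rHd_tail hlam hlam' hn hs
  constructor
  · rw [show (16*n - 1) * (∫ u in Set.Ioi s, rh lam n u)
        = ∫ u in Set.Ioi s, (16*n - 1) * rh lam n u from
      (MeasureTheory.integral_const_mul _ _).symm,
      show (16*n) * (∫ u in Set.Ioi s, rHd lam n u)
        = ∫ u in Set.Ioi s, (16*n) * rHd lam n u from
      (MeasureTheory.integral_const_mul _ _).symm]
    apply MeasureTheory.setIntegral_mono_on (hih.const_mul _) (hiHd.const_mul _)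
      measurableSet_Ioi
    intro x hx
    have hcl := rHd_close hlam hn (le_trans hs (le_of_lt hx))
    have h2 := neg_abs_le (rHd lam n x - rh lam n x)
    nlinarith [h2, hcl, abs_nonneg (rHd lam n x - rh lam n x)]
  · rw [show (16*n + 1) * (∫ u in Set.Ioi s, rh lam n u)
        = ∫ u in Set.Ioi s, (16*n + 1) * rh lam n u from
      (MeasureTheory.integral_const_mul _ _).symm,
      show (16*n) * (∫ u in Set.Ioi s, rHd lam n u)
        = ∫ u in Set.Ioi s, (16*n) * rHd lam n u from
      (MeasureTheory.integral_const_mul _ _).symm]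
    apply MeasureTheory.setIntegral_mono_on (hiHd.const_mul _) (hih.const_mul _)
      measurableSet_Ioi
    intro x hx
    have hcl := rHd_close hlam hn (le_trans hs (le_of_lt hx))
    have h2 := le_abs_self (rHd lam n x - rh lam n x)
    nlinarith [h2, hcl]

lemma tail_psi_bounds (hlam : lam = -1 ∨ lam = 1) (hlam' : lam = -1) (hn : 2 ≤ n)
    (g : ℝ →ᵇ ℝ) {s : ℝ} (hs : 4*n ≤ s) :
    (2*(n-1) - 1/256) * (∫ u in Set.Ioi s, rh lam n u) ≤ (∫ u in Set.Ioi s, rpsi lam n g u) ∧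
    (∫ u in Set.Ioi s, rpsi lam n g u) ≤ 2*(n-1) * (∫ u in Set.Ioi s, rh lam n u) := by
  have hih := integrableOn_rh_tail hlam' hn (s := s)
  have hipsi := integrableOn_rpsi_tail hlam hlam' hn g hs
  constructor
  · rw [show (2*(n-1) - 1/256) * (∫ u in Set.Ioi s, rh lam n u)
        = ∫ u in Set.Ioi s, (2*(n-1) - 1/256) * rh lam n u from
      (MeasureTheory.integral_const_mul _ _).symm]
    apply MeasureTheory.setIntegral_mono_on (hih.const_mul _) hipsi measurableSet_Ioi
    intro x hx
    exact (rpsi_bounds hlam hn g (le_trans hs (le_of_lt hx))).1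
  · rw [show 2*(n-1) * (∫ u in Set.Ioi s, rh lam n u)
        = ∫ u in Set.Ioi s, 2*(n-1) * rh lam n u from
      (MeasureTheory.integral_const_mul _ _).symm]
    apply MeasureTheory.setIntegral_mono_on hipsi (hih.const_mul _) measurableSet_Ioi
    intro x hx
    exact (rpsi_bounds hlam hn g (le_trans hs (le_of_lt hx))).2

lemma tail_split (hlam : lam = -1 ∨ lam = 1) (hlam' : lam = -1) (hn : 2 ≤ n)
    (g : ℝ →ᵇ ℝ) {s : ℝ} (hs : 4*n ≤ s) :
    ∫ u in Set.Ioi (4*n), rpsi lam n g u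
      = (∫ u in (4*n)..s, rpsi lam n g u) + ∫ u in Set.Ioi s, rpsi lam n g u := by
  rw [intervalIntegral.integral_of_le hs, ← Set.Ioc_union_Ioi_eq_Ioi hs,
    MeasureTheory.setIntegral_union (Set.Ioc_disjoint_Ioi le_rfl) measurableSet_Ioi
      ((integrableOn_rpsi_tail hlam hlam' hn g le_rfl).mono_set Set.Ioc_subset_Ioi_self)
      (integrableOn_rpsi_tail hlam hlam' hn g hs)]

lemma tail_psi_lip (hlam : lam = -1 ∨ lam = 1) (hlam' : lam = -1) (hn : 2 ≤ n)
    (g₁ g₂ : ℝ →ᵇ ℝ) {s : ℝ} (hs : 4*n ≤ s) :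
    |(∫ u in Set.Ioi s, rpsi lam n g₁ u) - ∫ u in Set.Ioi s, rpsi lam n g₂ u|
      ≤ (1/4) * dist g₁ g₂ * (∫ u in Set.Ioi s, rh lam n u) := by
  have hi₁ := integrableOn_rpsi_tail hlam hlam' hn g₁ hs
  have hi₂ := integrableOn_rpsi_tail hlam hlam' hn g₂ hs
  have hih := integrableOn_rh_tail hlam' hn (s := s)
  rw [← MeasureTheory.integral_sub hi₁ hi₂]
  rw [← Real.norm_eq_abs]
  refine le_trans (MeasureTheory.norm_integral_le_integral_norm _) ?_
  rw [show (1/4) * dist g₁ g₂ * (∫ u in Set.Ioi s, rh lam n u)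
      = ∫ u in Set.Ioi s, (1/4) * dist g₁ g₂ * rh lam n u from
    (MeasureTheory.integral_const_mul _ _).symm]
  apply MeasureTheory.setIntegral_mono_on ((hi₁.sub hi₂).norm) (hih.const_mul _)
    measurableSet_Ioi
  intro x hx
  rw [Real.norm_eq_abs]
  exact rpsi_lip hlam hn g₁ g₂ (le_trans hs (le_of_lt hx))

end


section
variable {lam n : ℝ}

def rP (lam n s : ℝ) : ℝ := Real.exp ((-lam) * s ^ 2 / 2) * s ^ (-(n+1))
def rQ (lam n : ℝ) (g : ℝ →ᵇ ℝ) (s : ℝ) : ℝ := ∫ u in (4*n)..s, rpsi lam n g u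
def rA (lam n : ℝ) (g : ℝ →ᵇ ℝ) : ℝ :=
  if lam = 1 then 2*(n-1) * rH lam n (4*n) else -(∫ u in Set.Ioi (4*n), rpsi lam n g u)
def rZ (lam n : ℝ) (g : ℝ →ᵇ ℝ) (s : ℝ) : ℝ := rP lam n s * (rA lam n g + rQ lam n g s)
def rF (lam n : ℝ) (g : ℝ →ᵇ ℝ) (s : ℝ) : ℝ := s^4 * rZ lam n g s

lemma rpow_neg_nat {s : ℝ} (hs : 0 < s) (k : ℕ) : s ^ (-(k : ℝ)) = (s ^ k)⁻¹ := by
  rw [Real.rpow_neg hs.le, Real.rpow_natCast]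

lemma rP_pos {s : ℝ} (hs : 0 < s) : 0 < rP lam n s := by
  unfold rP
  have := Real.rpow_pos_of_pos hs (-(n+1))
  positivity

lemma rW_pos {s : ℝ} (hs : 0 < s) : 0 < s^4 * rP lam n s := by
  have := rP_pos (lam := lam) (n := n) hs
  positivity

lemma WH (hn : 2 ≤ n) {s : ℝ} (hs : 0 < s) :
    (s^4 * rP lam n s) * rH lam n s = lam := by
  unfold rP rH
  have e1 : Real.exp ((-lam)*s^2/2) * Real.exp (lam*s^2/2) = 1 := by
    rw [← Real.exp_add, show (-lam)*s^2/2 + lam*s^2/2 = 0 by ring, Real.exp_zero]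
  have e2 : s^(4:ℕ) * (s^(-(n+1)) * s^(n-3)) = 1 := by
    rw [← Real.rpow_natCast s 4, ← Real.rpow_add hs, ← Real.rpow_add hs]
    rw [show (4:ℕ) + (-(n+1) + (n-3)) = (0:ℝ) by push_cast; ring, Real.rpow_zero]
  calc (s^4 * (Real.exp ((-lam)*s^2/2) * s ^ (-(n+1)))) * (lam * (Real.exp (lam*s^2/2) * s^(n-3)))
      = lam * ((Real.exp ((-lam)*s^2/2) * Real.exp (lam*s^2/2)) * (s^(4:ℕ) * (s^(-(n+1)) * s^(n-3)))) := by
        ring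
    _ = lam := by rw [e1, e2]; ring

lemma rH_pos_of_one (hlam1 : lam = 1) (hn : 2 ≤ n) {u : ℝ} (hu : 0 < u) :
    0 < rH lam n u := by
  subst hlam1
  unfold rH
  have := Real.rpow_pos_of_pos hu (n-3)
  positivity

-- interval bounds for Q
lemma Q_bounds (hlam : lam = -1 ∨ lam = 1) (hn : 2 ≤ n) (g : ℝ →ᵇ ℝ) {s : ℝ} (hs : 4*n ≤ s) :
    (2*(n-1) - 1/256) * (∫ u in (4*n)..s, rh lam n u) ≤ rQ lam n g s ∧
    rQ lam n g s ≤ 2*(n-1) * (∫ u in (4*n)..s, rh lam n u) := by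
  have h4n : (0:ℝ) < 4*n := by nlinarith
  have hs0 : (0:ℝ) < s := by nlinarith
  have hii_h : IntervalIntegrable (rh lam n) volume (4*n) s := ii_of_contOn rh_contOn h4n hs0
  have hii_p : IntervalIntegrable (rpsi lam n g) volume (4*n) s :=
    ii_of_contOn (rpsi_contOn g) h4n hs0
  unfold rQ
  constructor
  · rw [show (2*(n-1) - 1/256) * (∫ u in (4*n)..s, rh lam n u)
        = ∫ u in (4*n)..s, (2*(n-1) - 1/256) * rh lam n u from
      (intervalIntegral.integral_const_mul _ _).symm]
    apply intervalIntegral.integral_mono_on hs (hii_h.const_mul _) hii_p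
    exact fun x hx => (rpsi_bounds hlam hn g hx.1).1
  · rw [show 2*(n-1) * (∫ u in (4*n)..s, rh lam n u)
        = ∫ u in (4*n)..s, 2*(n-1) * rh lam n u from
      (intervalIntegral.integral_const_mul _ _).symm]
    apply intervalIntegral.integral_mono_on hs hii_p (hii_h.const_mul _)
    exact fun x hx => (rpsi_bounds hlam hn g hx.1).2

lemma Q_lip (hlam : lam = -1 ∨ lam = 1) (hn : 2 ≤ n) (g₁ g₂ : ℝ →ᵇ ℝ) {s : ℝ} (hs : 4*n ≤ s) :
    |rQ lam n g₁ s - rQ lam n g₂ s|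
      ≤ (1/4) * dist g₁ g₂ * (∫ u in (4*n)..s, rh lam n u) := by
  have h4n : (0:ℝ) < 4*n := by nlinarith
  have hs0 : (0:ℝ) < s := by nlinarith
  have hii_h : IntervalIntegrable (rh lam n) volume (4*n) s := ii_of_contOn rh_contOn h4n hs0
  have hii_1 : IntervalIntegrable (rpsi lam n g₁) volume (4*n) s :=
    ii_of_contOn (rpsi_contOn g₁) h4n hs0
  have hii_2 : IntervalIntegrable (rpsi lam n g₂) volume (4*n) s :=
    ii_of_contOn (rpsi_contOn g₂) h4n hs0
  unfold rQ
  rw [← intervalIntegral.integral_sub hii_1 hii_2, ← Real.norm_eq_abs]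
  refine le_trans (intervalIntegral.norm_integral_le_integral_norm hs) ?_
  rw [show (1/4) * dist g₁ g₂ * (∫ u in (4*n)..s, rh lam n u)
      = ∫ u in (4*n)..s, (1/4) * dist g₁ g₂ * rh lam n u from
    (intervalIntegral.integral_const_mul _ _).symm]
  apply intervalIntegral.integral_mono_on hs ((hii_1.sub hii_2).norm) (hii_h.const_mul _)
  intro x hx
  rw [Real.norm_eq_abs]
  exact rpsi_lip hlam hn g₁ g₂ hx.1

lemma rF_eq (g : ℝ →ᵇ ℝ) (s : ℝ) :
    rF lam n g s = (s^4 * rP lam n s) * (rA lam n g + rQ lam n g s) := by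
  unfold rF rZ; ring

-- the crucial range estimate
lemma rF_range (hlam : lam = -1 ∨ lam = 1) (hn : 2 ≤ n) (g : ℝ →ᵇ ℝ) {s : ℝ} (hs : 4*n ≤ s) :
    2*lam*(n-1) - 1 ≤ rF lam n g s ∧ rF lam n g s ≤ 2*lam*(n-1) + 1 := by
  have h4n : (0:ℝ) < 4*n := by nlinarith
  have hs0 : (0:ℝ) < s := by nlinarith
  rcases hlam with hlam' | hlam'
  · -- λ = -1 : tail representation
    subst hlam'
    have hlam : (-1:ℝ) = -1 ∨ (-1:ℝ) = 1 := Or.inl rfl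
    have hw : 0 < s^4 * rP (-1) n s := rW_pos hs0
    have hwy : (s^4 * rP (-1) n s) * rH (-1) n s = -1 := WH hn hs0
    have hA : rA (-1) n g = -(∫ u in Set.Ioi (4*n), rpsi (-1) n g u) := by
      unfold rA
      exact if_neg (by norm_num)
    have hAQ : rA (-1) n g + rQ (-1) n g s = -(∫ u in Set.Ioi s, rpsi (-1) n g u) := by
      have ht := tail_split hlam rfl hn g hs
      rw [hA]
      unfold rQ
      linarith [ht]
    have hI0 : 0 ≤ ∫ u in Set.Ioi s, rh (-1) n u := by
      apply MeasureTheory.setIntegral_nonneg measurableSet_Ioi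
      intro x hx
      exact (rh_pos (lt_trans hs0 hx)).le
    obtain ⟨hIa, hIb⟩ := tail_h_bounds hlam rfl hn hs
    obtain ⟨hJa, hJb⟩ := tail_psi_bounds hlam rfl hn g hs
    rw [rF_eq, hAQ]
    set I := ∫ u in Set.Ioi s, rh (-1) n u with hIdef
    set J := ∫ u in Set.Ioi s, rpsi (-1) n g u with hJdef
    set w := s^4 * rP (-1) n s with hwdef
    clear_value I J w
    have e0 : w * ((16*n) * (- rH (-1) n s)) = 16*n := by linear_combination (-16*n) * hwy
    have m1 := mul_le_mul_of_nonneg_left hIa hw.le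
    have m2 := mul_le_mul_of_nonneg_left hIb hw.le
    have m3 := mul_le_mul_of_nonneg_left hJa hw.le
    have m4 := mul_le_mul_of_nonneg_left hJb hw.le
    have mI : 0 ≤ w * I := mul_nonneg hw.le hI0
    have hu1 : (16*n-1)*(w*I) ≤ 16*n := by nlinarith [m1, e0]
    have hu2 : 16*n ≤ (16*n+1)*(w*I) := by nlinarith [m2, e0]
    have hv1 : (2*(n-1) - 1/256)*(w*I) ≤ w*J := by nlinarith [m3]
    have hv2 : w*J ≤ 2*(n-1)*(w*I) := by nlinarith [m4]
    clear m1 m2 m3 m4 e0 hIa hIb hJa hJb hAQ hA hI0 hIdef hJdef hwdef hwy hw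
    constructor
    · nlinarith [hu1, hv2, mI, hn,
        mul_pos (show (0:ℝ) < 16*n-1 by nlinarith) (show (0:ℝ) < 2*n-2+1 by nlinarith)]
    · nlinarith [hu2, hv1, mI, hn]
  · -- λ = 1
    subst hlam'
    have hlam : (1:ℝ) = -1 ∨ (1:ℝ) = 1 := Or.inr rfl
    have hw : 0 < s^4 * rP 1 n s := rW_pos hs0
    have hwy : (s^4 * rP 1 n s) * rH 1 n s = 1 := WH hn hs0
    have hA : rA 1 n g = 2*(n-1) * rH 1 n (4*n) := by
      unfold rA
      exact if_pos rfl
    have hE0 : 0 ≤ ∫ u in (4*n)..s, rh 1 n u := E_nonneg hn hs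
    obtain ⟨hEa, hEb⟩ := E_bounds hlam hn hs
    obtain ⟨hQa, hQb⟩ := Q_bounds hlam hn g hs
    have hx0 : 0 < rH 1 n (4*n) := rH_pos_of_one rfl hn h4n
    rw [rF_eq, hA]
    set E := ∫ u in (4*n)..s, rh 1 n u with hEdef
    set x := rH 1 n (4*n) with hxdef
    set y := rH 1 n s with hydef
    set Q := rQ 1 n g s with hQdef
    set w := s^4 * rP 1 n s with hwdef
    clear_value E x y Q w
    clear hEdef hxdef hydef hQdef hwdef hA
    have e0 : w * ((16*n) * (y - x)) = 16*n - (16*n)*(w*x) := by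
      linear_combination (16*n) * hwy
    have m1 := mul_le_mul_of_nonneg_left hEa hw.le
    have m2 := mul_le_mul_of_nonneg_left hEb hw.le
    have m3 := mul_le_mul_of_nonneg_left hQa hw.le
    have m4 := mul_le_mul_of_nonneg_left hQb hw.le
    have mE : 0 ≤ w * E := mul_nonneg hw.le hE0
    have mt : 0 ≤ w * x := mul_nonneg hw.le hx0.le
    have he1 : (16*n-1)*(w*E) ≤ 16*n*(1 - w*x) := by linarith [m1, e0]
    have he2 : 16*n*(1 - w*x) ≤ (16*n+1)*(w*E) := by linarith [m2, e0]
    have hq1 : (2*(n-1) - 1/256)*(w*E) ≤ w*Q := by linarith [m3]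
    have hq2 : w*Q ≤ 2*(n-1)*(w*E) := by linarith [m4]
    clear m1 m2 m3 m4 e0 hEa hEb hQa hQb hwy hw
    have goal1 : 2*1*(n-1) - 1 ≤ 2*(n-1)*(w*x) + w*Q := by
      nlinarith [he2, hq1, mE, mt, hn]
    have goal2 : 2*(n-1)*(w*x) + w*Q ≤ 2*1*(n-1) + 1 := by
      nlinarith [he1, hq2, mE, mt, hn]
    constructor
    · linarith [goal1]
    · linarith [goal2]

-- the contraction estimate
lemma rF_lip (hlam : lam = -1 ∨ lam = 1) (hn : 2 ≤ n) (g₁ g₂ : ℝ →ᵇ ℝ) {s : ℝ}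
    (hs : 4*n ≤ s) :
    |rF lam n g₁ s - rF lam n g₂ s| ≤ (1/2) * dist g₁ g₂ := by
  have h4n : (0:ℝ) < 4*n := by nlinarith
  have hs0 : (0:ℝ) < s := by nlinarith
  have hd0 : 0 ≤ dist g₁ g₂ := dist_nonneg
  rcases hlam with hlam' | hlam'
  · -- λ = -1
    subst hlam'
    have hlam : (-1:ℝ) = -1 ∨ (-1:ℝ) = 1 := Or.inl rfl
    have hw : 0 < s^4 * rP (-1) n s := rW_pos hs0
    have hwy : (s^4 * rP (-1) n s) * rH (-1) n s = -1 := WH hn hs0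
    have hA : ∀ g : ℝ →ᵇ ℝ, rA (-1) n g + rQ (-1) n g s
        = -(∫ u in Set.Ioi s, rpsi (-1) n g u) := by
      intro g
      have ht := tail_split hlam rfl hn g hs
      unfold rA
      rw [if_neg (by norm_num)]
      unfold rQ
      linarith [ht]
    have hI0 : 0 ≤ ∫ u in Set.Ioi s, rh (-1) n u := by
      apply MeasureTheory.setIntegral_nonneg measurableSet_Ioi
      intro x hx
      exact (rh_pos (lt_trans hs0 hx)).le
    obtain ⟨hIa, _⟩ := tail_h_bounds hlam rfl hn hs
    have hJlip := tail_psi_lip hlam rfl hn g₁ g₂ hs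
    have heq : rF (-1) n g₁ s - rF (-1) n g₂ s
        = (s^4 * rP (-1) n s) * ((∫ u in Set.Ioi s, rpsi (-1) n g₂ u)
            - ∫ u in Set.Ioi s, rpsi (-1) n g₁ u) := by
      rw [rF_eq, rF_eq, hA g₁, hA g₂]
      ring
    rw [heq, abs_mul, abs_of_pos hw, abs_sub_comm]
    set I := ∫ u in Set.Ioi s, rh (-1) n u with hIdef
    set w := s^4 * rP (-1) n s with hwdef
    clear_value I w
    have e0 : w * ((16*n) * (- rH (-1) n s)) = 16*n := by linear_combination (-16*n) * hwy
    have m1 := mul_le_mul_of_nonneg_left hIa hw.le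
    have mI : 0 ≤ w * I := mul_nonneg hw.le hI0
    have hu1 : (16*n-1)*(w*I) ≤ 16*n := by nlinarith [m1, e0]
    have hwI2 : w * I ≤ 2 := by
      nlinarith [hu1, mI, hn, (show (0:ℝ) < 16*n-1 by nlinarith)]
    clear m1 e0 hIa hA hI0 hwy
    calc w * |(∫ u in Set.Ioi s, rpsi (-1) n g₁ u) - ∫ u in Set.Ioi s, rpsi (-1) n g₂ u|
        ≤ w * ((1/4) * dist g₁ g₂ * I) := mul_le_mul_of_nonneg_left hJlip hw.le
      _ = (1/4) * dist g₁ g₂ * (w * I) := by ring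
      _ ≤ (1/2) * dist g₁ g₂ := by nlinarith [hwI2, hd0, mI]
  · -- λ = 1
    subst hlam'
    have hlam : (1:ℝ) = -1 ∨ (1:ℝ) = 1 := Or.inr rfl
    have hw : 0 < s^4 * rP 1 n s := rW_pos hs0
    have hwy : (s^4 * rP 1 n s) * rH 1 n s = 1 := WH hn hs0
    have hE0 : 0 ≤ ∫ u in (4*n)..s, rh 1 n u := E_nonneg hn hs
    obtain ⟨hEa, _⟩ := E_bounds hlam hn hs
    have hQlip := Q_lip hlam hn g₁ g₂ hs
    have hx0 : 0 < rH 1 n (4*n) := rH_pos_of_one rfl hn h4n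
    have hA : ∀ g : ℝ →ᵇ ℝ, rA 1 n g = 2*(n-1) * rH 1 n (4*n) := by
      intro g
      unfold rA
      exact if_pos rfl
    have heq : rF 1 n g₁ s - rF 1 n g₂ s
        = (s^4 * rP 1 n s) * (rQ 1 n g₁ s - rQ 1 n g₂ s) := by
      rw [rF_eq, rF_eq, hA g₁, hA g₂]
      ring
    rw [heq, abs_mul, abs_of_pos hw]
    set E := ∫ u in (4*n)..s, rh 1 n u with hEdef
    set x := rH 1 n (4*n) with hxdef
    set y := rH 1 n s with hydef
    set w := s^4 * rP 1 n s with hwdef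
    clear_value E x y w
    have e0 : w * ((16*n) * (y - x)) = 16*n - (16*n)*(w*x) := by
      linear_combination (16*n) * hwy
    have m1 := mul_le_mul_of_nonneg_left hEa hw.le
    have mE : 0 ≤ w * E := mul_nonneg hw.le hE0
    have mt : 0 ≤ w * x := mul_nonneg hw.le hx0.le
    have hu1 : (16*n-1)*(w*E) ≤ 16*n := by nlinarith [m1, e0, mt]
    have hwE2 : w * E ≤ 2 := by
      nlinarith [hu1, mE, hn, (show (0:ℝ) < 16*n-1 by nlinarith)]
    clear m1 e0 hEa hA hx0 hE0 hwy
    calc w * |rQ 1 n g₁ s - rQ 1 n g₂ s|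
        ≤ w * ((1/4) * dist g₁ g₂ * E) := mul_le_mul_of_nonneg_left hQlip hw.le
      _ = (1/4) * dist g₁ g₂ * (w * E) := by ring
      _ ≤ (1/2) * dist g₁ g₂ := by nlinarith [hwE2, hd0, mE]

end


section
variable {lam n : ℝ}

lemma rF_contOn (hn : 2 ≤ n) (g : ℝ →ᵇ ℝ) : ContinuousOn (rF lam n g) (Set.Ioi 0) := by
  have hQ : ContinuousOn (rQ lam n g) (Set.Ioi 0) :=
    fun s hs => ((Q_hasDeriv g hn hs).continuousAt).continuousWithinAt
  have hP : ContinuousOn (rP lam n) (Set.Ioi 0) := by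
    unfold rP
    exact (cont_exp_sq (lam := -lam)).continuousOn.mul (contOn_rpow _)
  have : ContinuousOn (rZ lam n g) (Set.Ioi 0) := hP.mul (continuousOn_const.add hQ)
  exact (continuous_pow 4).continuousOn.mul this

lemma lam_mul_bounds (hlam : lam = -1 ∨ lam = 1) (hn : 2 ≤ n) :
    -(2*(n-1)) ≤ 2*lam*(n-1) ∧ 2*lam*(n-1) ≤ 2*(n-1) := by
  rcases hlam with h | h <;> subst h <;> constructor <;> nlinarith

-- the derivative value identity
lemma deriv_identity (hn : 2 ≤ n) (g : ℝ →ᵇ ℝ) {s : ℝ} (hs0 : 0 < s)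
    (hgs : rcl lam n (g s) = g s) (hgsF : g s = s^4 * rZ lam n g s) :
    s * (2*(n-1)/s^4 - (n+1) * rZ lam n g s / s^2 - lam * rZ lam n g s - (rZ lam n g s)^2)
      = Real.exp ((-lam) * s ^ 2 / 2)
          * ((-lam) * s * s ^ (-(n+1)) + (-(n+1)) * s ^ (-(n+1) - 1))
          * (rA lam n g + rQ lam n g s)
        + rP lam n s * rpsi lam n g s := by
  have hsne : s ≠ 0 := hs0.ne'
  have e0 : Real.exp ((-lam)*s^2/2) * Real.exp (lam*s^2/2) = 1 := by
    rw [← Real.exp_add, show (-lam)*s^2/2 + lam*s^2/2 = 0 by ring, Real.exp_zero]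
  have e1 : s^(-(n+1)) * s^(n-2) = (s^3)⁻¹ := by
    rw [← Real.rpow_add hs0, show -(n+1) + (n-2) = -((3:ℕ):ℝ) by push_cast; ring,
      rpow_neg_nat hs0 3]
  have e2 : s^(-(n+1)) * s^(n-6) = (s^7)⁻¹ := by
    rw [← Real.rpow_add hs0, show -(n+1) + (n-6) = -((7:ℕ):ℝ) by push_cast; ring,
      rpow_neg_nat hs0 7]
  have e3 : s ^ (-(n+1) - 1) = s ^ (-(n+1)) * s⁻¹ := by
    rw [show -(n+1) - 1 = -(n+1) + (-1) by ring, Real.rpow_add hs0, Real.rpow_neg_one]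
  have hpsi : rP lam n s * rpsi lam n g s
      = 2*(n-1) * (s^3)⁻¹ - (g s)^2 * (s^7)⁻¹ := by
    calc rP lam n s * rpsi lam n g s
        = (Real.exp ((-lam)*s^2/2) * Real.exp (lam*s^2/2))
            * (2*(n-1) * (s^(-(n+1)) * s^(n-2))
               - (rcl lam n (g s))^2 * (s^(-(n+1)) * s^(n-6))) := by
          unfold rP rpsi; ring
      _ = 2*(n-1) * (s^3)⁻¹ - (g s)^2 * (s^7)⁻¹ := by rw [e0, e1, e2, hgs]; ring
  have hPd : Real.exp ((-lam) * s ^ 2 / 2)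
        * ((-lam) * s * s ^ (-(n+1)) + (-(n+1)) * s ^ (-(n+1) - 1))
      = rP lam n s * ((-lam) * s - (n+1) * s⁻¹) := by
    rw [e3]; unfold rP; ring
  rw [hpsi, hPd, hgsF]
  have hZexp : rZ lam n g s = rP lam n s * (rA lam n g + rQ lam n g s) := rfl
  rw [hZexp]
  field_simp
  ring

lemma riccati_core (lam n : ℝ) (hlam : lam = -1 ∨ lam = 1) (hn : 2 ≤ n) :
    ∃ Z : ℝ → ℝ,
      (∀ s, 4*n ≤ s → HasDerivAt Z
        (s * (2 * (n - 1) / s ^ 4 - (n + 1) * Z s / s ^ 2 - lam * Z s - (Z s) ^ 2)) s) ∧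
      (∀ s, 4*n ≤ s →
        2*lam*(n-1) - 1 ≤ s^4 * Z s ∧ s^4 * Z s ≤ 2*lam*(n-1) + 1) := by
  have h4n : (0:ℝ) < 4*n := by nlinarith
  -- the Picard-type map
  have hFcont : ∀ g : ℝ →ᵇ ℝ, Continuous (fun x : ℝ => rF lam n g (max x (4*n))) := by
    intro g
    have hmax : Continuous (fun x : ℝ => max x (4*n)) := continuous_id.max continuous_const
    have hmem : ∀ x : ℝ, max x (4*n) ∈ Set.Ioi (0:ℝ) :=
      fun x => lt_of_lt_of_le h4n (le_max_right _ _)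
    have := (rF_contOn (lam := lam) hn g).comp_continuous hmax hmem
    exact this
  have hFbound : ∀ (g : ℝ →ᵇ ℝ) (x : ℝ), ‖rF lam n g (max x (4*n))‖ ≤ 2*n := by
    intro g x
    obtain ⟨h1, h2⟩ := rF_range hlam hn g (le_max_right x (4*n))
    obtain ⟨hl1, hl2⟩ := lam_mul_bounds hlam hn
    rw [Real.norm_eq_abs, abs_le]
    constructor <;> nlinarith
  set T : (ℝ →ᵇ ℝ) → (ℝ →ᵇ ℝ) := fun g =>
    BoundedContinuousFunction.ofNormedAddCommGroup _ (hFcont g) (2*n) (hFbound g) with hTdef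
  have hTapp : ∀ (g : ℝ →ᵇ ℝ) (x : ℝ), T g x = rF lam n g (max x (4*n)) := by
    intro g x
    rw [hTdef]
    rfl
  have hcontr : ContractingWith (1/2 : NNReal) T := by
    constructor
    · rw [← NNReal.coe_lt_coe]
      norm_num
    · apply LipschitzWith.of_dist_le_mul
      intro g₁ g₂
      have hC : (0:ℝ) ≤ (1/2) * dist g₁ g₂ := by positivity
      rw [show ((1/2 : NNReal) : ℝ) = 1/2 by norm_num]
      rw [BoundedContinuousFunction.dist_le hC]
      intro x
      rw [hTapp, hTapp, Real.dist_eq]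
      exact rF_lip hlam hn g₁ g₂ (le_max_right x (4*n))
  set g := ContractingWith.fixedPoint T hcontr with hgdef
  have hfix : T g = g := hcontr.fixedPoint_isFixedPt
  have hgval : ∀ x, g x = rF lam n g (max x (4*n)) := by
    intro x
    have h1 : T g x = g x := by rw [hfix]
    rw [← h1, hTapp]
  have hgrange : ∀ x, 2*lam*(n-1) - 1 ≤ g x ∧ g x ≤ 2*lam*(n-1) + 1 := by
    intro x
    rw [hgval x]
    exact rF_range hlam hn g (le_max_right _ _)
  have hgF : ∀ s, 4*n ≤ s → g s = rF lam n g s := by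
    intro s hs
    rw [hgval s, max_eq_left hs]
  refine ⟨rZ lam n g, ?_, ?_⟩
  · -- the ODE
    intro s hs
    have hs0 : (0:ℝ) < s := lt_of_lt_of_le h4n hs
    have hP : HasDerivAt (fun x : ℝ => Real.exp ((-lam) * x ^ 2 / 2) * x ^ (-(n+1)))
        (Real.exp ((-lam) * s ^ 2 / 2)
          * ((-lam) * s * s ^ (-(n+1)) + (-(n+1)) * s ^ (-(n+1) - 1))) s :=
      hasDerivAt_exp_sq_mul_rpow (-lam) (-(n+1)) hs0
    have hQd : HasDerivAt (fun t => ∫ u in (4*n)..t, rpsi lam n g u) (rpsi lam n g s) s :=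
      Q_hasDeriv g hn hs0
    have hZd := hP.mul (hQd.const_add (rA lam n g))
    have hgs : rcl lam n (g s) = g s := rcl_eq_self (hgrange s).1 (hgrange s).2
    have hgsF : g s = s^4 * rZ lam n g s := by
      rw [hgF s hs]; rfl
    have key := deriv_identity (lam := lam) hn g hs0 hgs hgsF
    rw [key]
    exact hZd
  · -- the bounds
    intro s hs
    have hb := hgrange s
    rw [hgF s hs] at hb
    exact hb

end

end RiccatiAux

open Filter Asymptotics

/-- For `λ ∈ {−1,+1}` and real `n ≥ 2` there exist `s₀ > 0` and a
differentiable solution `Z` on `[s₀,∞)` of the Riccati equation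
`(1/s)·dZ/ds = 2(n−1)/s⁴ − (n+1)Z/s² − λZ − Z²` satisfying
`(2λ(n−1) − 1)/s⁴ ≤ Z(s) ≤ (2λ(n−1) + 1)/s⁴` for all `s ≥ s₀`; in particular
`Z(s) = (2λ(n−1) + O(1))·s⁻⁴` as `s → ∞`. -/
theorem riccati_solution_near_infinity
    (lam : ℝ) (hlam : lam = -1 ∨ lam = 1) (n : ℝ) (hn : 2 ≤ n) :
    ∃ s₀ > (0 : ℝ), ∃ Z : ℝ → ℝ,
      (∀ s, s₀ ≤ s → HasDerivAt Z
        (s * (2 * (n - 1) / s ^ 4 - (n + 1) * Z s / s ^ 2 - lam * Z s - (Z s) ^ 2)) s) ∧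
      (∀ s, s₀ ≤ s →
        (2 * lam * (n - 1) - 1) / s ^ 4 ≤ Z s ∧ Z s ≤ (2 * lam * (n - 1) + 1) / s ^ 4) ∧
      ((fun s => Z s - 2 * lam * (n - 1) / s ^ 4) =O[atTop] fun s => 1 / s ^ 4) := by
  obtain ⟨Z, hode, hbounds⟩ := riccati_core lam n hlam hn
  have h4n : (0:ℝ) < 4*n := by nlinarith
  refine ⟨4*n, h4n, Z, hode, ?_, ?_⟩
  · intro s hs
    have hs0 : (0:ℝ) < s := lt_of_lt_of_le h4n hs
    have hs4 : (0:ℝ) < s^4 := by positivity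
    obtain ⟨h1, h2⟩ := hbounds s hs
    constructor
    · rw [div_le_iff₀ hs4]
      nlinarith [h1]
    · rw [le_div_iff₀ hs4]
      nlinarith [h2]
  · rw [Asymptotics.isBigO_iff]
    refine ⟨1, ?_⟩
    filter_upwards [Filter.eventually_ge_atTop (4*n)] with s hs
    have hs0 : (0:ℝ) < s := lt_of_lt_of_le h4n hs
    have hs4 : (0:ℝ) < s^4 := by positivity
    obtain ⟨h1, h2⟩ := hbounds s hs
    rw [Real.norm_eq_abs, Real.norm_eq_abs, one_mul]
    have key : Z s - 2*lam*(n-1)/s^4 = (s^4 * Z s - 2*lam*(n-1))/s^4 := by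
      field_simp
    rw [key, abs_div, abs_of_pos hs4, abs_of_pos (show (0:ℝ) < 1/s^4 by positivity)]
    have habs : |s^4 * Z s - 2*lam*(n-1)| ≤ 1 := abs_le.mpr ⟨by linarith, by linarith⟩
    calc |s^4 * Z s - 2*lam*(n-1)| / s^4 ≤ 1 / s^4 := by gcongr
      _ = 1/s^4 := rfl
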